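/- arXiv:1205.5129 — 3 statements merged into one kernel-verified Lean document; each statement's English description precedes it below -/
import Mathlib

section
/- Let 0 < d ≤ 1, 0 < ε ≤ 1 with ε ≤ d, and let f, g ∈ H¹(−d, d). Then |(1/(2ε))·∫_{−ε}^{ε} f(s)·conj(g(s)) ds − f(0)·conj(g(0))| ≤ 2·(ε/d)^{1/2}·‖f‖_{H¹(−d,d)}·‖g‖_{H¹(−d,d)}. -/
open MeasureTheory intervalIntegral

lemma conj_hasDerivAt {g : ℝ → ℂ} {g' : ℂ} {t : ℝ} (h : HasDerivAt g g' t) :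
    HasDerivAt (fun s => (starRingEnd ℂ) (g s)) ((starRingEnd ℂ) g') t := by
  exact h.star

lemma intervalIntegrable_conj {u : ℝ → ℂ} {a b : ℝ} (h : IntervalIntegrable u volume a b) :
    IntervalIntegrable (fun t => (starRingEnd ℂ) (u t)) volume a b := by
  constructor
  · have := Complex.conjCLE.toContinuousLinearMap.integrable_comp h.1
    simpa [IntegrableOn] using this
  · have := Complex.conjCLE.toContinuousLinearMap.integrable_comp h.2
    simpa [IntegrableOn] using this

lemma normSq_hasDerivAt {g : ℝ → ℂ} {g' : ℂ} {t : ℝ} (h : HasDerivAt g g' t) :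
    HasDerivAt (fun s => ‖g s‖ ^ 2) ((g' * (starRingEnd ℂ) (g t) + g t * (starRingEnd ℂ) g').re) t := by
  have h1 : HasDerivAt (fun s => g s * (starRingEnd ℂ) (g s))
      (g' * (starRingEnd ℂ) (g t) + g t * (starRingEnd ℂ) g') t := h.mul (conj_hasDerivAt h)
  have h2 := Complex.reCLM.hasFDerivAt.comp_hasDerivAt t h1
  have e : (fun s => Complex.reCLM (g s * (starRingEnd ℂ) (g s))) = fun s => ‖g s‖ ^ 2 := by
    funext s
    have := Complex.mul_conj (g s)
    simp only [Complex.reCLM_apply, this]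
    rw [Complex.ofReal_re, ← Complex.sq_norm]
  simp only [Function.comp_def] at h2
  rw [e] at h2
  simpa using h2

lemma cs_set {s : Set ℝ} (u v : ℝ → ℝ)
    (hu_nn : ∀ x, 0 ≤ u x) (hv_nn : ∀ x, 0 ≤ v x)
    (hu : AEStronglyMeasurable u (volume.restrict s))
    (hv : AEStronglyMeasurable v (volume.restrict s))
    (hu2 : IntegrableOn (fun x => u x ^ 2) s) (hv2 : IntegrableOn (fun x => v x ^ 2) s) :
    ∫ x in s, u x * v x ≤ Real.sqrt (∫ x in s, u x ^ 2) * Real.sqrt (∫ x in s, v x ^ 2) := by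
  have hpq : Real.HolderConjugate 2 2 := ⟨by norm_num, by norm_num, by norm_num⟩
  have h2 : (ENNReal.ofReal (2:ℝ)) = 2 := by norm_num
  have hmu : MemLp u (ENNReal.ofReal (2:ℝ)) (volume.restrict s) := by
    rw [h2]; exact (memLp_two_iff_integrable_sq hu).2 hu2
  have hmv : MemLp v (ENNReal.ofReal (2:ℝ)) (volume.restrict s) := by
    rw [h2]; exact (memLp_two_iff_integrable_sq hv).2 hv2
  have H := integral_mul_le_Lp_mul_Lq_of_nonneg hpq
    (Filter.Eventually.of_forall hu_nn) (Filter.Eventually.of_forall hv_nn) hmu hmv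
  have e1 : ∀ w : ℝ → ℝ, (∫ x in s, w x ^ (2:ℝ)) = ∫ x in s, w x ^ 2 := by
    intro w; refine integral_congr_ae (Filter.Eventually.of_forall fun x => ?_)
    norm_num
  rw [e1 u, e1 v] at H
  rw [Real.sqrt_eq_rpow, Real.sqrt_eq_rpow]
  exact H

lemma sup_sq_bound (d : ℝ) (hd : 0 < d) (g g' : ℝ → ℂ)
    (hg_cont : ContinuousOn g (Set.Icc (-d) d))
    (hg_deriv : ∀ t ∈ Set.Ioo (-d) d, HasDerivAt g (g' t) t)
    (hg'_int : IntervalIntegrable g' volume (-d) d)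
    (hg'_sq : IntervalIntegrable (fun t => ‖g' t‖ ^ 2) volume (-d) d)
    {x : ℝ} (hx : x ∈ Set.Icc (-d) d) :
    ‖g x‖ ^ 2 ≤ (1/(2*d)) * (∫ t in (-d)..d, ‖g t‖^2)
      + 2 * Real.sqrt (∫ t in (-d)..d, ‖g t‖^2) * Real.sqrt (∫ t in (-d)..d, ‖g' t‖^2) := by
  have hdd : (-d) ≤ d := by linarith
  set h : ℝ → ℝ := fun t => ‖g t‖ ^ 2 with hh
  have hcont : ContinuousOn h (Set.Icc (-d) d) := (hg_cont.norm).pow 2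
  have huIcc : Set.uIcc (-d) d = Set.Icc (-d) d := Set.uIcc_of_le hdd
  have Int_h : IntervalIntegrable h volume (-d) d :=
    (huIcc ▸ hcont : ContinuousOn h (Set.uIcc (-d) d)).intervalIntegrable
  obtain ⟨y, hy, hymin⟩ := isCompact_Icc.exists_isMinOn (Set.nonempty_of_mem hx) hcont
  have step1 : h y ≤ (1/(2*d)) * ∫ t in (-d)..d, h t := by
    have hmono := intervalIntegral.integral_mono_on hdd
      (intervalIntegrable_const (c := h y)) Int_h (fun t ht => hymin ht)
    rw [intervalIntegral.integral_const, smul_eq_mul] at hmono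
    rw [div_mul_eq_mul_div, le_div_iff₀ (by linarith : (0:ℝ) < 2*d)]
    nlinarith
  set D : ℝ → ℝ := fun t => (g' t * (starRingEnd ℂ) (g t) + g t * (starRingEnd ℂ) (g' t)).re with hD
  have hDderiv : ∀ t ∈ Set.Ioo (-d) d, HasDerivAt h (D t) t := fun t ht =>
    normSq_hasDerivAt (hg_deriv t ht)
  have hgconj_cont : ContinuousOn (fun t => (starRingEnd ℂ) (g t)) (Set.uIcc (-d) d) := by
    rw [huIcc]; exact Complex.continuous_conj.comp_continuousOn hg_cont
  have hA : IntervalIntegrable (fun t => g' t * (starRingEnd ℂ) (g t)) volume (-d) d :=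
    hg'_int.mul_continuousOn hgconj_cont
  have hDint : IntervalIntegrable D volume (-d) d := by
    have hAre : IntervalIntegrable (fun t => (g' t * (starRingEnd ℂ) (g t)).re) volume (-d) d :=
      ⟨hA.1.re, hA.2.re⟩
    have hEq : D = fun t => (g' t * (starRingEnd ℂ) (g t)).re + (g' t * (starRingEnd ℂ) (g t)).re := by
      funext t; simp [hD]; ring
    rw [hEq]; exact hAre.add hAre
  have hDabs : ∀ t, |D t| ≤ 2 * (‖g t‖ * ‖g' t‖) := by
    intro t
    have hEq : D t = 2 * (g' t * (starRingEnd ℂ) (g t)).re := by simp [hD]; ring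
    rw [hEq, abs_mul, abs_two]
    have h2 : |(g' t * (starRingEnd ℂ) (g t)).re| ≤ ‖g' t * (starRingEnd ℂ) (g t)‖ :=
      Complex.abs_re_le_norm _
    have h3 : ‖g' t * (starRingEnd ℂ) (g t)‖ = ‖g t‖ * ‖g' t‖ := by
      rw [norm_mul]; simp [mul_comm]
    nlinarith [abs_nonneg ((g' t * (starRingEnd ℂ) (g t)).re)]
  have hDabsInt : IntegrableOn (fun t => |D t|) (Set.Ioc (-d) d) := hDint.abs.1
  have hmono2 : ∀ u v : ℝ, u ∈ Set.Icc (-d) d → v ∈ Set.Icc (-d) d → u ≤ v →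
      |∫ t in u..v, D t| ≤ ∫ t in Set.Ioc (-d) d, |D t| := by
    intro u v hu hv huv
    calc |∫ t in u..v, D t| ≤ ∫ t in u..v, |D t| :=
          intervalIntegral.abs_integral_le_integral_abs huv
      _ = ∫ t in Set.Ioc u v, |D t| := intervalIntegral.integral_of_le huv
      _ ≤ ∫ t in Set.Ioc (-d) d, |D t| :=
          setIntegral_mono_set hDabsInt (Filter.Eventually.of_forall fun t => abs_nonneg _)
            ((Set.Ioc_subset_Ioc hu.1 hv.2).eventuallyLE)
  have hftc : ∀ u v : ℝ, u ∈ Set.Icc (-d) d → v ∈ Set.Icc (-d) d → u ≤ v →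
      ∫ t in u..v, D t = h v - h u := by
    intro u v hu hv huv
    exact integral_eq_sub_of_hasDeriv_right_of_le huv
      (hcont.mono (Set.Icc_subset_Icc hu.1 hv.2))
      (fun t ht => (hDderiv t ⟨lt_of_le_of_lt hu.1 ht.1, lt_of_lt_of_le ht.2 hv.2⟩).hasDerivWithinAt)
      (hDint.mono_set (by rw [huIcc, Set.uIcc_of_le huv]; exact Set.Icc_subset_Icc hu.1 hv.2))
  have key : h x - h y ≤ ∫ t in Set.Ioc (-d) d, |D t| := by
    rcases le_total x y with hxy | hxy
    · have heq := hftc x y hx hy hxy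
      have h2 := hmono2 x y hx hy hxy
      rw [heq] at h2
      calc h x - h y ≤ |h y - h x| := by rw [abs_sub_comm]; exact le_abs_self _
        _ ≤ _ := h2
    · have heq := hftc y x hy hx hxy
      have h2 := hmono2 y x hy hx hxy
      rw [heq] at h2
      exact (le_abs_self _).trans h2
  have hgnorm_meas : AEStronglyMeasurable (fun t => ‖g t‖) (volume.restrict (Set.Ioc (-d) d)) :=
    ((hg_cont.mono Set.Ioc_subset_Icc_self).aestronglyMeasurable measurableSet_Ioc).norm
  have hg'norm_meas : AEStronglyMeasurable (fun t => ‖g' t‖) (volume.restrict (Set.Ioc (-d) d)) :=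
    hg'_int.1.aestronglyMeasurable.norm
  have hcs := cs_set (fun t => ‖g t‖) (fun t => ‖g' t‖) (fun t => norm_nonneg _)
    (fun t => norm_nonneg _) hgnorm_meas hg'norm_meas Int_h.1 hg'_sq.1
  have hprod_int : IntegrableOn (fun t => 2 * (‖g t‖ * ‖g' t‖)) (Set.Ioc (-d) d) :=
    (((hg'_int.norm).continuousOn_mul (by rw [huIcc]; exact hg_cont.norm)).const_mul 2).1
  have hstep : ∫ t in Set.Ioc (-d) d, |D t| ≤ 2 * ∫ t in Set.Ioc (-d) d, ‖g t‖ * ‖g' t‖ := by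
    rw [← MeasureTheory.integral_const_mul]
    exact setIntegral_mono_on hDabsInt hprod_int measurableSet_Ioc (fun t _ => hDabs t)
  have hIoc1 : (∫ t in (-d)..d, ‖g t‖^2) = ∫ t in Set.Ioc (-d) d, ‖g t‖^2 :=
    intervalIntegral.integral_of_le hdd
  have hIoc2 : (∫ t in (-d)..d, ‖g' t‖^2) = ∫ t in Set.Ioc (-d) d, ‖g' t‖^2 :=
    intervalIntegral.integral_of_le hdd
  have hxb : h x ≤ h y + ∫ t in Set.Ioc (-d) d, |D t| := by linarith
  calc h x ≤ h y + ∫ t in Set.Ioc (-d) d, |D t| := hxb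
    _ ≤ (1/(2*d)) * (∫ t in (-d)..d, h t) + 2 * ∫ t in Set.Ioc (-d) d, ‖g t‖ * ‖g' t‖ := by
        linarith
    _ ≤ (1/(2*d)) * (∫ t in (-d)..d, ‖g t‖^2)
        + 2 * Real.sqrt (∫ t in (-d)..d, ‖g t‖^2) * Real.sqrt (∫ t in (-d)..d, ‖g' t‖^2) := by
        rw [hIoc1, hIoc2]
        have h5 : (2:ℝ) * ∫ t in Set.Ioc (-d) d, ‖g t‖ * ‖g' t‖
            ≤ 2 * (Real.sqrt (∫ t in Set.Ioc (-d) d, ‖g t‖^2)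
              * Real.sqrt (∫ t in Set.Ioc (-d) d, ‖g' t‖^2)) := by
          linarith
        linarith [h5]

lemma norm_le_M (d : ℝ) (hd : 0 < d) (hd1 : d ≤ 1) (g g' : ℝ → ℂ)
    (hg_cont : ContinuousOn g (Set.Icc (-d) d))
    (hg_deriv : ∀ t ∈ Set.Ioo (-d) d, HasDerivAt g (g' t) t)
    (hg'_int : IntervalIntegrable g' volume (-d) d)
    (hg'_sq : IntervalIntegrable (fun t => ‖g' t‖ ^ 2) volume (-d) d)
    {x : ℝ} (hx : x ∈ Set.Icc (-d) d) :
    ‖g x‖ ≤ Real.sqrt (3/(2*d) * ((∫ t in (-d)..d, ‖g t‖^2) + ∫ t in (-d)..d, ‖g' t‖^2)) := by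
  have hdd : (-d) ≤ d := by linarith
  set Ag := ∫ t in (-d)..d, ‖g t‖^2 with hAgdef
  set Bg := ∫ t in (-d)..d, ‖g' t‖^2 with hBgdef
  have hAg : 0 ≤ Ag := intervalIntegral.integral_nonneg hdd (fun t _ => by positivity)
  have hBg : 0 ≤ Bg := intervalIntegral.integral_nonneg hdd (fun t _ => by positivity)
  have h1 := sup_sq_bound d hd g g' hg_cont hg_deriv hg'_int hg'_sq hx
  have s1 : Real.sqrt Ag * Real.sqrt Bg ≤ (Ag + Bg)/2 := by
    nlinarith [sq_nonneg (Real.sqrt Ag - Real.sqrt Bg), Real.sq_sqrt hAg, Real.sq_sqrt hBg]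
  have h2 : ‖g x‖^2 ≤ 3/(2*d) * (Ag + Bg) := by
    have hd2 : (0:ℝ) < 2*d := by linarith
    rw [← hAgdef, ← hBgdef] at h1
    have hmul := mul_le_mul_of_nonneg_right h1 hd2.le
    have hfa : 1/(2*d)*Ag*(2*d) = Ag := by field_simp
    have h4 : 2*(Real.sqrt Ag*Real.sqrt Bg)*(2*d) ≤ (Ag+Bg)*(2*d) := by nlinarith
    have h5 : (Ag+Bg)*(2*d) ≤ 2*(Ag+Bg) := by nlinarith
    have key2 : ‖g x‖^2 * (2*d) ≤ 3 * (Ag + Bg) := by nlinarith [hmul, hfa, h4, h5]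
    calc ‖g x‖^2 = ‖g x‖^2 * (2*d) / (2*d) := by field_simp
      _ ≤ 3 * (Ag+Bg) / (2*d) := by gcongr
      _ = 3/(2*d)*(Ag+Bg) := by ring
  calc ‖g x‖ = Real.sqrt (‖g x‖^2) := (Real.sqrt_sq (norm_nonneg _)).symm
    _ ≤ _ := Real.sqrt_le_sqrt h2

lemma cs_interval (d ε : ℝ) (hε : 0 < ε) (hεd : ε ≤ d) (u : ℝ → ℂ)
    (hu_int : IntervalIntegrable u volume (-d) d)
    (hu_sq : IntervalIntegrable (fun t => ‖u t‖ ^ 2) volume (-d) d) :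
    ∫ t in (-ε)..ε, ‖u t‖ ≤ Real.sqrt (2*ε) * Real.sqrt (∫ t in (-d)..d, ‖u t‖^2) := by
  have hee : (-ε) ≤ ε := by linarith
  have hdd : (-d) ≤ d := by linarith
  have hsub : Set.Ioc (-ε) ε ⊆ Set.Ioc (-d) d := Set.Ioc_subset_Ioc (by linarith) hεd
  have husub : Set.uIcc (-ε) ε ⊆ Set.uIcc (-d) d := by
    rw [Set.uIcc_of_le hee, Set.uIcc_of_le hdd]
    exact Set.Icc_subset_Icc (by linarith) hεd
  have hfin : volume (Set.Ioc (-ε) ε) < ⊤ := measure_Ioc_lt_top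
  have h1 := cs_set (s := Set.Ioc (-ε) ε) (fun t => ‖u t‖) (fun _ => (1:ℝ))
    (fun _ => norm_nonneg _) (fun _ => zero_le_one)
    ((hu_int.mono_set husub).1.aestronglyMeasurable.norm)
    aestronglyMeasurable_const
    (hu_sq.mono_set husub).1
    (by simpa using (integrableOn_const (C := (1:ℝ)) (s := Set.Ioc (-ε) ε) (μ := volume)).2 (Or.inr hfin))
  have e2 : ∫ t in Set.Ioc (-ε) ε, ((1:ℝ))^2 = 2*ε := by
    simp [Real.volume_Ioc]
    rw [max_eq_left (by linarith)]
    ring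
  have e3 : ∫ t in Set.Ioc (-ε) ε, ‖u t‖^2 ≤ ∫ t in (-d)..d, ‖u t‖^2 := by
    rw [intervalIntegral.integral_of_le hdd]
    exact setIntegral_mono_set hu_sq.1 (Filter.Eventually.of_forall fun t => by positivity)
      hsub.eventuallyLE
  rw [intervalIntegral.integral_of_le hee]
  calc ∫ t in Set.Ioc (-ε) ε, ‖u t‖ = ∫ t in Set.Ioc (-ε) ε, ‖u t‖ * 1 := by simp
    _ ≤ Real.sqrt (∫ t in Set.Ioc (-ε) ε, ‖u t‖^2) * Real.sqrt (∫ t in Set.Ioc (-ε) ε, ((1:ℝ))^2) := h1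
    _ ≤ Real.sqrt (∫ t in (-d)..d, ‖u t‖^2) * Real.sqrt (2*ε) := by
        rw [e2]
        exact mul_le_mul_of_nonneg_right (Real.sqrt_le_sqrt e3) (Real.sqrt_nonneg _)
    _ = Real.sqrt (2*ε) * Real.sqrt (∫ t in (-d)..d, ‖u t‖^2) := mul_comm _ _

lemma weighted_ftc_bound (d ε : ℝ) (hd : 0 < d)
    (hε : 0 < ε) (hεd : ε ≤ d)
    (f f' g g' : ℝ → ℂ)
    (hf_cont : ContinuousOn f (Set.Icc (-d) d))
    (hf_deriv : ∀ t ∈ Set.Ioo (-d) d, HasDerivAt f (f' t) t)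
    (hf'_int : IntervalIntegrable f' volume (-d) d)
    (hg_cont : ContinuousOn g (Set.Icc (-d) d))
    (hg_deriv : ∀ t ∈ Set.Ioo (-d) d, HasDerivAt g (g' t) t)
    (hg'_int : IntervalIntegrable g' volume (-d) d) :
    ‖(∫ s in (-ε)..ε, f s * (starRingEnd ℂ) (g s)) - ((2*ε:ℝ):ℂ) * (f 0 * (starRingEnd ℂ) (g 0))‖
      ≤ ε * ∫ t in (-ε)..ε, ‖f' t * (starRingEnd ℂ) (g t) + f t * (starRingEnd ℂ) (g' t)‖ := by
  have hdd : (-d) ≤ d := by linarith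
  have hee : (-ε) ≤ ε := by linarith
  have huIccd : Set.uIcc (-d) d = Set.Icc (-d) d := Set.uIcc_of_le hdd
  set F : ℝ → ℂ := fun s => f s * (starRingEnd ℂ) (g s) with hFdef
  set F' : ℝ → ℂ := fun t => f' t * (starRingEnd ℂ) (g t) + f t * (starRingEnd ℂ) (g' t) with hF'def
  have hgc_cont : ContinuousOn (fun t => (starRingEnd ℂ) (g t)) (Set.Icc (-d) d) :=
    Complex.continuous_conj.comp_continuousOn hg_cont
  have hF_cont : ContinuousOn F (Set.Icc (-d) d) := hf_cont.mul hgc_cont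
  have hF_deriv : ∀ t ∈ Set.Ioo (-d) d, HasDerivAt F (F' t) t := fun t ht =>
    (hf_deriv t ht).mul (conj_hasDerivAt (hg_deriv t ht))
  have hF'_int : IntervalIntegrable F' volume (-d) d := by
    apply IntervalIntegrable.add
    · exact hf'_int.mul_continuousOn (huIccd ▸ hgc_cont)
    · exact (intervalIntegrable_conj hg'_int).continuousOn_mul (huIccd ▸ hf_cont)
  have hFbig : IntervalIntegrable F volume (-d) d :=
    (huIccd ▸ hF_cont : ContinuousOn F (Set.uIcc (-d) d)).intervalIntegrable
  have hsubR : Set.uIcc (0:ℝ) ε ⊆ Set.uIcc (-d) d := by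
    rw [huIccd, Set.uIcc_of_le hε.le]
    exact Set.Icc_subset_Icc (by linarith) hεd
  have hsubL : Set.uIcc (-ε) (0:ℝ) ⊆ Set.uIcc (-d) d := by
    rw [huIccd, Set.uIcc_of_le (by linarith : (-ε) ≤ (0:ℝ))]
    exact Set.Icc_subset_Icc (by linarith) (by linarith)
  set P : ℝ → ℂ := fun t => ∫ s in (0:ℝ)..t, F s with hPdef
  have hP_deriv : ∀ t ∈ Set.Ioo (-d) d, HasDerivAt P (F t) t := by
    intro t ht
    have hnh : Set.Icc (-d) d ∈ nhds t := Icc_mem_nhds ht.1 ht.2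
    refine intervalIntegral.integral_hasDerivAt_right (hFbig.mono_set ?_)
      ⟨Set.Icc (-d) d, hnh, hF_cont.aestronglyMeasurable measurableSet_Icc⟩
      (hF_cont.continuousAt hnh)
    refine Set.uIcc_subset_uIcc ?_ ?_
    · rw [huIccd]; exact ⟨by linarith, by linarith⟩
    · rw [huIccd]; exact ⟨ht.1.le, ht.2.le⟩
  have ftcR : ∫ t in (0:ℝ)..ε, F' t * ((ε - t : ℝ) : ℂ)
      = (∫ s in (0:ℝ)..ε, F s) - F 0 * (ε:ℂ) := by
    have hG_deriv : ∀ t ∈ Set.Ioo (0:ℝ) ε,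
        HasDerivWithinAt (fun t => F t * ((ε - t : ℝ):ℂ) + P t)
          (F' t * ((ε - t:ℝ):ℂ)) (Set.Ioi t) t := by
      intro t ht
      have ht' : t ∈ Set.Ioo (-d) d := ⟨by linarith [ht.1], lt_of_lt_of_le ht.2 hεd⟩
      have hw : HasDerivAt (fun t : ℝ => ((ε - t : ℝ) : ℂ)) (-1) t := by
        have h0 : HasDerivAt (fun t : ℝ => ε - t) (-1) t := by
          simpa using (hasDerivAt_id t).const_sub ε
        have := Complex.ofRealCLM.hasFDerivAt.comp_hasDerivAt t h0
        simpa [Function.comp_def] using this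
      have h1 := ((hF_deriv t ht').mul hw).add (hP_deriv t ht')
      have heq : F' t * ((ε - t:ℝ):ℂ) = F' t * ((ε - t:ℝ):ℂ) + F t * (-1) + F t := by ring
      rw [heq]
      exact h1.hasDerivWithinAt
    have hGcont : ContinuousOn (fun t => F t * ((ε - t:ℝ):ℂ) + P t) (Set.Icc 0 ε) := by
      apply ContinuousOn.add
      · exact (hF_cont.mono (Set.Icc_subset_Icc (by linarith) hεd)).mul
          (Complex.continuous_ofReal.comp (continuous_const.sub continuous_id)).continuousOn
      · have := intervalIntegral.continuousOn_primitive_interval'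
          (hFbig.mono_set hsubR) (Set.left_mem_uIcc)
        exact this.mono (by rw [Set.uIcc_of_le hε.le])
    have hint : IntervalIntegrable (fun t => F' t * ((ε - t:ℝ):ℂ)) volume 0 ε :=
      (hF'_int.mono_set hsubR).mul_continuousOn
        ((Complex.continuous_ofReal.comp (continuous_const.sub continuous_id)).continuousOn)
    have hres := integral_eq_sub_of_hasDeriv_right_of_le hε.le hGcont hG_deriv hint
    rw [hres]
    simp [hPdef, intervalIntegral.integral_same]
  have ftcL : ∫ t in (-ε)..(0:ℝ), F' t * ((-ε - t : ℝ) : ℂ)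
      = (∫ s in (-ε)..(0:ℝ), F s) - F 0 * (ε:ℂ) := by
    have hG_deriv : ∀ t ∈ Set.Ioo (-ε) (0:ℝ),
        HasDerivWithinAt (fun t => F t * ((-ε - t : ℝ):ℂ) + P t)
          (F' t * ((-ε - t:ℝ):ℂ)) (Set.Ioi t) t := by
      intro t ht
      have ht' : t ∈ Set.Ioo (-d) d := ⟨by linarith [ht.1], by linarith [ht.2]⟩
      have hw : HasDerivAt (fun t : ℝ => ((-ε - t : ℝ) : ℂ)) (-1) t := by
        have h0 : HasDerivAt (fun t : ℝ => -ε - t) (-1) t := by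
          simpa using (hasDerivAt_id t).const_sub (-ε)
        have := Complex.ofRealCLM.hasFDerivAt.comp_hasDerivAt t h0
        simpa [Function.comp_def] using this
      have h1 := ((hF_deriv t ht').mul hw).add (hP_deriv t ht')
      have heq : F' t * ((-ε - t:ℝ):ℂ) = F' t * ((-ε - t:ℝ):ℂ) + F t * (-1) + F t := by ring
      rw [heq]
      exact h1.hasDerivWithinAt
    have hGcont : ContinuousOn (fun t => F t * ((-ε - t:ℝ):ℂ) + P t) (Set.Icc (-ε) 0) := by
      apply ContinuousOn.add
      · exact (hF_cont.mono (Set.Icc_subset_Icc (by linarith) (by linarith))).mul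
          (Complex.continuous_ofReal.comp (continuous_const.sub continuous_id)).continuousOn
      · have := intervalIntegral.continuousOn_primitive_interval'
          (hFbig.mono_set hsubL) (Set.right_mem_uIcc)
        exact this.mono (by rw [Set.uIcc_of_le (by linarith : (-ε) ≤ (0:ℝ))])
    have hint : IntervalIntegrable (fun t => F' t * ((-ε - t:ℝ):ℂ)) volume (-ε) 0 :=
      (hF'_int.mono_set hsubL).mul_continuousOn
        ((Complex.continuous_ofReal.comp (continuous_const.sub continuous_id)).continuousOn)
    have hres := integral_eq_sub_of_hasDeriv_right_of_le (by linarith : (-ε) ≤ (0:ℝ))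
      hGcont hG_deriv hint
    rw [hres]
    have hP0 : P 0 = 0 := intervalIntegral.integral_same
    have hPε : P (-ε) = -∫ s in (-ε)..(0:ℝ), F s := intervalIntegral.integral_symm _ _
    simp only [hP0, hPε]
    push_cast
    ring
  have hadj : (∫ s in (-ε)..(0:ℝ), F s) + (∫ s in (0:ℝ)..ε, F s) = ∫ s in (-ε)..ε, F s :=
    intervalIntegral.integral_add_adjacent_intervals (hFbig.mono_set hsubL) (hFbig.mono_set hsubR)
  have hsum : (∫ s in (-ε)..ε, F s) - ((2*ε:ℝ):ℂ) * F 0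
      = (∫ t in (0:ℝ)..ε, F' t * ((ε - t : ℝ) : ℂ))
        + ∫ t in (-ε)..(0:ℝ), F' t * ((-ε - t : ℝ) : ℂ) := by
    rw [ftcR, ftcL, ← hadj]
    push_cast
    ring
  have hF'nR : IntervalIntegrable (fun t => ‖F' t‖) volume 0 ε := (hF'_int.mono_set hsubR).norm
  have hF'nL : IntervalIntegrable (fun t => ‖F' t‖) volume (-ε) 0 := (hF'_int.mono_set hsubL).norm
  have hnormR : ‖∫ t in (0:ℝ)..ε, F' t * ((ε - t : ℝ) : ℂ)‖ ≤ ε * ∫ t in (0:ℝ)..ε, ‖F' t‖ := by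
    calc ‖∫ t in (0:ℝ)..ε, F' t * ((ε - t : ℝ) : ℂ)‖
        ≤ ∫ t in (0:ℝ)..ε, ‖F' t * ((ε - t : ℝ) : ℂ)‖ :=
          intervalIntegral.norm_integral_le_integral_norm hε.le
      _ ≤ ∫ t in (0:ℝ)..ε, ‖F' t‖ * ε := by
          apply intervalIntegral.integral_mono_on hε.le
          · exact ((hF'_int.mono_set hsubR).mul_continuousOn
              ((Complex.continuous_ofReal.comp (continuous_const.sub continuous_id)).continuousOn)).norm
          · exact hF'nR.mul_const ε
          · intro t ht
            rw [norm_mul, Complex.norm_real, Real.norm_eq_abs]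
            refine mul_le_mul_of_nonneg_left ?_ (norm_nonneg _)
            rw [abs_of_nonneg (by linarith [ht.2] : (0:ℝ) ≤ ε - t)]
            linarith [ht.1]
      _ = ε * ∫ t in (0:ℝ)..ε, ‖F' t‖ := by
          rw [intervalIntegral.integral_mul_const]; ring
  have hnormL : ‖∫ t in (-ε)..(0:ℝ), F' t * ((-ε - t : ℝ) : ℂ)‖
      ≤ ε * ∫ t in (-ε)..(0:ℝ), ‖F' t‖ := by
    calc ‖∫ t in (-ε)..(0:ℝ), F' t * ((-ε - t : ℝ) : ℂ)‖
        ≤ ∫ t in (-ε)..(0:ℝ), ‖F' t * ((-ε - t : ℝ) : ℂ)‖ :=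
          intervalIntegral.norm_integral_le_integral_norm (by linarith)
      _ ≤ ∫ t in (-ε)..(0:ℝ), ‖F' t‖ * ε := by
          apply intervalIntegral.integral_mono_on (by linarith : (-ε) ≤ (0:ℝ))
          · exact ((hF'_int.mono_set hsubL).mul_continuousOn
              ((Complex.continuous_ofReal.comp (continuous_const.sub continuous_id)).continuousOn)).norm
          · exact hF'nL.mul_const ε
          · intro t ht
            rw [norm_mul, Complex.norm_real, Real.norm_eq_abs]
            refine mul_le_mul_of_nonneg_left ?_ (norm_nonneg _)
            rw [abs_le]
            exact ⟨by linarith [ht.1, ht.2], by linarith [ht.1, ht.2]⟩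
      _ = ε * ∫ t in (-ε)..(0:ℝ), ‖F' t‖ := by
          rw [intervalIntegral.integral_mul_const]; ring
  have hadjN : (∫ t in (-ε)..(0:ℝ), ‖F' t‖) + (∫ t in (0:ℝ)..ε, ‖F' t‖)
      = ∫ t in (-ε)..ε, ‖F' t‖ :=
    intervalIntegral.integral_add_adjacent_intervals hF'nL hF'nR
  calc ‖(∫ s in (-ε)..ε, F s) - ((2*ε:ℝ):ℂ) * F 0‖
      = ‖(∫ t in (0:ℝ)..ε, F' t * ((ε - t : ℝ) : ℂ))
        + ∫ t in (-ε)..(0:ℝ), F' t * ((-ε - t : ℝ) : ℂ)‖ := by rw [hsum]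
    _ ≤ ‖∫ t in (0:ℝ)..ε, F' t * ((ε - t : ℝ) : ℂ)‖
        + ‖∫ t in (-ε)..(0:ℝ), F' t * ((-ε - t : ℝ) : ℂ)‖ := norm_add_le _ _
    _ ≤ ε * (∫ t in (0:ℝ)..ε, ‖F' t‖) + ε * ∫ t in (-ε)..(0:ℝ), ‖F' t‖ := by
        linarith
    _ = ε * ∫ t in (-ε)..ε, ‖F' t‖ := by rw [← hadjN]; ring

/-- Averaging lemma: for `0 < d ≤ 1`, `0 < ε ≤ 1` with `ε ≤ d`, and
`f, g ∈ H¹(−d,d)` (continuous representatives with derivatives `f'`, `g'`),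
`|(1/(2ε))·∫_{−ε}^{ε} f·conj g − f(0)·conj(g(0))| ≤ 2·(ε/d)^{1/2}·‖f‖_{H¹}·‖g‖_{H¹}`,
where `‖f‖_{H¹} = (‖f‖²_{L²} + ‖f′‖²_{L²})^{1/2}`. -/
theorem averaging_estimate (d ε : ℝ) (hd : 0 < d) (hd1 : d ≤ 1)
    (hε : 0 < ε) (hε1 : ε ≤ 1) (hεd : ε ≤ d)
    (f f' g g' : ℝ → ℂ)
    (hf_cont : ContinuousOn f (Set.Icc (-d) d))
    (hf_deriv : ∀ t ∈ Set.Ioo (-d) d, HasDerivAt f (f' t) t)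
    (hf'_int : IntervalIntegrable f' volume (-d) d)
    (hf'_sq : IntervalIntegrable (fun t => ‖f' t‖ ^ 2) volume (-d) d)
    (hg_cont : ContinuousOn g (Set.Icc (-d) d))
    (hg_deriv : ∀ t ∈ Set.Ioo (-d) d, HasDerivAt g (g' t) t)
    (hg'_int : IntervalIntegrable g' volume (-d) d)
    (hg'_sq : IntervalIntegrable (fun t => ‖g' t‖ ^ 2) volume (-d) d) :
    ‖((1 / (2 * ε) : ℝ) : ℂ) * (∫ s in (-ε)..ε, f s * (starRingEnd ℂ) (g s))
        - f 0 * (starRingEnd ℂ) (g 0)‖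
      ≤ 2 * Real.sqrt (ε / d)
          * Real.sqrt ((∫ t in (-d)..d, ‖f t‖ ^ 2) + ∫ t in (-d)..d, ‖f' t‖ ^ 2)
          * Real.sqrt ((∫ t in (-d)..d, ‖g t‖ ^ 2) + ∫ t in (-d)..d, ‖g' t‖ ^ 2) := by
  have hdd : (-d) ≤ d := by linarith
  have hee : (-ε) ≤ ε := by linarith
  have huIccd : Set.uIcc (-d) d = Set.Icc (-d) d := Set.uIcc_of_le hdd
  have hsubε : Set.uIcc (-ε) ε ⊆ Set.uIcc (-d) d := by
    rw [huIccd, Set.uIcc_of_le hee]; exact Set.Icc_subset_Icc (by linarith) hεd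
  set Af := ∫ t in (-d)..d, ‖f t‖ ^ 2 with hAfdef
  set Bf := ∫ t in (-d)..d, ‖f' t‖ ^ 2 with hBfdef
  set Ag := ∫ t in (-d)..d, ‖g t‖ ^ 2 with hAgdef
  set Bg := ∫ t in (-d)..d, ‖g' t‖ ^ 2 with hBgdef
  have hAf : 0 ≤ Af := intervalIntegral.integral_nonneg hdd (fun t _ => by positivity)
  have hBf : 0 ≤ Bf := intervalIntegral.integral_nonneg hdd (fun t _ => by positivity)
  have hAg : 0 ≤ Ag := intervalIntegral.integral_nonneg hdd (fun t _ => by positivity)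
  have hBg : 0 ≤ Bg := intervalIntegral.integral_nonneg hdd (fun t _ => by positivity)
  set Hf := Real.sqrt (Af + Bf) with hHfdef
  set Hg := Real.sqrt (Ag + Bg) with hHgdef
  set Mf := Real.sqrt (3/(2*d) * (Af + Bf)) with hMfdef
  set Mg := Real.sqrt (3/(2*d) * (Ag + Bg)) with hMgdef
  have hMf0 : 0 ≤ Mf := Real.sqrt_nonneg _
  have hMg0 : 0 ≤ Mg := Real.sqrt_nonneg _
  have hHf0 : 0 ≤ Hf := Real.sqrt_nonneg _
  have hHg0 : 0 ≤ Hg := Real.sqrt_nonneg _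
  have hMfb : ∀ t ∈ Set.Icc (-d) d, ‖f t‖ ≤ Mf := by
    intro t ht
    have h := norm_le_M d hd hd1 f f' hf_cont hf_deriv hf'_int hf'_sq ht
    rw [← hAfdef, ← hBfdef] at h
    exact h
  have hMgb : ∀ t ∈ Set.Icc (-d) d, ‖g t‖ ≤ Mg := by
    intro t ht
    have h := norm_le_M d hd hd1 g g' hg_cont hg_deriv hg'_int hg'_sq ht
    rw [← hAgdef, ← hBgdef] at h
    exact h
  have hgc_cont : ContinuousOn (fun t => (starRingEnd ℂ) (g t)) (Set.Icc (-d) d) :=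
    Complex.continuous_conj.comp_continuousOn hg_cont
  have hF'_int : IntervalIntegrable
      (fun t => f' t * (starRingEnd ℂ) (g t) + f t * (starRingEnd ℂ) (g' t)) volume (-d) d := by
    apply IntervalIntegrable.add
    · exact hf'_int.mul_continuousOn (huIccd ▸ hgc_cont)
    · exact (intervalIntegrable_conj hg'_int).continuousOn_mul (huIccd ▸ hf_cont)
  have hF'ε : IntervalIntegrable
      (fun t => f' t * (starRingEnd ℂ) (g t) + f t * (starRingEnd ℂ) (g' t)) volume (-ε) ε :=
    hF'_int.mono_set hsubε
  have hf'ε : IntervalIntegrable f' volume (-ε) ε := hf'_int.mono_set hsubε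
  have hg'ε : IntervalIntegrable g' volume (-ε) ε := hg'_int.mono_set hsubε
  have hkey := weighted_ftc_bound d ε hd hε hεd f f' g g' hf_cont hf_deriv hf'_int
    hg_cont hg_deriv hg'_int
  set N := ∫ t in (-ε)..ε, ‖f' t * (starRingEnd ℂ) (g t) + f t * (starRingEnd ℂ) (g' t)‖
    with hNdef
  have hNb : N ≤ (∫ t in (-ε)..ε, ‖f' t‖) * Mg + Mf * ∫ t in (-ε)..ε, ‖g' t‖ := by
    have hptw : ∀ t ∈ Set.Icc (-ε) ε,
        ‖f' t * (starRingEnd ℂ) (g t) + f t * (starRingEnd ℂ) (g' t)‖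
          ≤ ‖f' t‖ * Mg + Mf * ‖g' t‖ := by
      intro t ht
      have htd : t ∈ Set.Icc (-d) d := ⟨by linarith [ht.1], by linarith [ht.2]⟩
      calc ‖f' t * (starRingEnd ℂ) (g t) + f t * (starRingEnd ℂ) (g' t)‖
          ≤ ‖f' t * (starRingEnd ℂ) (g t)‖ + ‖f t * (starRingEnd ℂ) (g' t)‖ := norm_add_le _ _
        _ = ‖f' t‖ * ‖g t‖ + ‖f t‖ * ‖g' t‖ := by
            rw [norm_mul, norm_mul, RCLike.norm_conj, RCLike.norm_conj]
        _ ≤ ‖f' t‖ * Mg + Mf * ‖g' t‖ :=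
            add_le_add (mul_le_mul_of_nonneg_left (hMgb t htd) (norm_nonneg _))
              (mul_le_mul_of_nonneg_right (hMfb t htd) (norm_nonneg _))
    have hm := intervalIntegral.integral_mono_on hee hF'ε.norm
      ((hf'ε.norm.mul_const Mg).add (hg'ε.norm.const_mul Mf)) hptw
    rw [intervalIntegral.integral_add (hf'ε.norm.mul_const Mg) (hg'ε.norm.const_mul Mf),
      intervalIntegral.integral_mul_const, intervalIntegral.integral_const_mul] at hm
    exact hm
  have hCSf := cs_interval d ε hε hεd f' hf'_int hf'_sq
  rw [← hBfdef] at hCSf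
  have hCSg := cs_interval d ε hε hεd g' hg'_int hg'_sq
  rw [← hBgdef] at hCSg
  have c1 : ((1 / (2 * ε) : ℝ) : ℂ) * ((2*ε:ℝ):ℂ) = 1 := by
    have hεne : (ε:ℂ) ≠ 0 := by exact_mod_cast hε.ne'
    push_cast
    field_simp
  have hL : ((1 / (2 * ε) : ℝ) : ℂ) * (∫ s in (-ε)..ε, f s * (starRingEnd ℂ) (g s))
        - f 0 * (starRingEnd ℂ) (g 0)
      = ((1 / (2 * ε) : ℝ) : ℂ) * ((∫ s in (-ε)..ε, f s * (starRingEnd ℂ) (g s))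
        - ((2*ε:ℝ):ℂ) * (f 0 * (starRingEnd ℂ) (g 0))) := by
    rw [mul_sub, ← mul_assoc, c1, one_mul]
  rw [hL, norm_mul, Complex.norm_real, Real.norm_eq_abs,
    abs_of_pos (by positivity : (0:ℝ) < 1/(2*ε))]
  calc 1/(2*ε) * ‖(∫ s in (-ε)..ε, f s * (starRingEnd ℂ) (g s))
        - ((2*ε:ℝ):ℂ) * (f 0 * (starRingEnd ℂ) (g 0))‖
      ≤ 1/(2*ε) * (ε * N) := mul_le_mul_of_nonneg_left hkey (by positivity)
    _ = N / 2 := by field_simp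
    _ ≤ ((Real.sqrt (2*ε) * Real.sqrt Bf) * Mg + Mf * (Real.sqrt (2*ε) * Real.sqrt Bg)) / 2 := by
        have t1 : (∫ t in (-ε)..ε, ‖f' t‖) * Mg ≤ (Real.sqrt (2*ε) * Real.sqrt Bf) * Mg :=
          mul_le_mul_of_nonneg_right hCSf hMg0
        have t2 : Mf * (∫ t in (-ε)..ε, ‖g' t‖) ≤ Mf * (Real.sqrt (2*ε) * Real.sqrt Bg) :=
          mul_le_mul_of_nonneg_left hCSg hMf0
        linarith
    _ ≤ 2 * Real.sqrt (ε/d) * Hf * Hg := by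
        have hMgHg : Mg = Real.sqrt (3/(2*d)) * Hg := by
          rw [hMgdef, Real.sqrt_mul (by positivity), hHgdef]
        have hMfHf : Mf = Real.sqrt (3/(2*d)) * Hf := by
          rw [hMfdef, Real.sqrt_mul (by positivity), hHfdef]
        have hBfHf : Real.sqrt Bf ≤ Hf := Real.sqrt_le_sqrt (by linarith)
        have hBgHg : Real.sqrt Bg ≤ Hg := Real.sqrt_le_sqrt (by linarith)
        have e3 : Real.sqrt (2*ε) * Real.sqrt (3/(2*d)) ≤ 2 * Real.sqrt (ε/d) := by
          rw [← Real.sqrt_mul (by positivity)]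
          rw [show 2*ε*(3/(2*d)) = 3*(ε/d) by field_simp]
          rw [Real.sqrt_mul (by norm_num)]
          have h3 : Real.sqrt 3 ≤ 2 := by
            rw [show (2:ℝ) = Real.sqrt 4 by
              rw [show (4:ℝ) = 2^2 by norm_num, Real.sqrt_sq (by norm_num)]]
            exact Real.sqrt_le_sqrt (by norm_num)
          exact mul_le_mul_of_nonneg_right h3 (Real.sqrt_nonneg _)
        have term1 : (Real.sqrt (2*ε) * Real.sqrt Bf) * Mg ≤ 2 * Real.sqrt (ε/d) * Hf * Hg := by
          rw [hMgHg]
          calc Real.sqrt (2*ε) * Real.sqrt Bf * (Real.sqrt (3/(2*d)) * Hg)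
              = (Real.sqrt (2*ε) * Real.sqrt (3/(2*d))) * (Real.sqrt Bf * Hg) := by ring
            _ ≤ (2 * Real.sqrt (ε/d)) * (Hf * Hg) :=
                mul_le_mul e3 (mul_le_mul_of_nonneg_right hBfHf hHg0) (by positivity) (by positivity)
            _ = 2 * Real.sqrt (ε/d) * Hf * Hg := by ring
        have term2 : Mf * (Real.sqrt (2*ε) * Real.sqrt Bg) ≤ 2 * Real.sqrt (ε/d) * Hf * Hg := by
          rw [hMfHf]
          calc Real.sqrt (3/(2*d)) * Hf * (Real.sqrt (2*ε) * Real.sqrt Bg)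
              = (Real.sqrt (2*ε) * Real.sqrt (3/(2*d))) * (Hf * Real.sqrt Bg) := by ring
            _ ≤ (2 * Real.sqrt (ε/d)) * (Hf * Hg) :=
                mul_le_mul e3 (mul_le_mul_of_nonneg_left hBgHg hHf0) (by positivity) (by positivity)
            _ = 2 * Real.sqrt (ε/d) * Hf * Hg := by ring
        linarith
end

section
/- Let Y be a compact Riemannian manifold of volume 1, I = [−d, d], A ∈ ℝ, w ∈ ℝ, 0 < ε ≤ min{1, d}. For f ∈ H¹(I) and u ∈ H¹(I × Y), define h_ε(Jf, u) = ∫_{−d}^{d} ⟨f′(s)·𝟙 + iA f(s)·𝟙, u(s, ·)⟩_{L²(Y)} ds + (w/(2ε))·∫_{−ε}^{ε} ⟨f(s)·𝟙, u(s,·)⟩_{L²(Y)} ds and ȟ(f, J*u) = ∫_{−d}^{d} (f′(s) + iA f(s))·conj((J*u)(s)) ds + w·f(0)·conj((J*u)(0)), where (J*u)(s) = ∫_Y u(s,y)dy. Then |h_ε(Jf, u) − ȟ(f, J*u)| ≤ 2|w|·(ε/d)^{1/2}·‖f‖_{H¹(I)}·‖u‖_{H¹(I×Y)}. -/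
open MeasureTheory intervalIntegral

/-- Cauchy–Schwarz: L¹ norm bounded by sqrt(length) times L² norm on an interval. -/
lemma l1_le_sqrt_len_mul_l2 {a b : ℝ} (hab : a ≤ b) (F : ℝ → ℂ)
    (h1 : IntervalIntegrable F volume a b)
    (h2 : IntervalIntegrable (fun t => ‖F t‖ ^ 2) volume a b) :
    (∫ t in a..b, ‖F t‖) ≤ Real.sqrt (b - a) * Real.sqrt (∫ t in a..b, ‖F t‖ ^ 2) := by
  set ν := volume.restrict (Set.Ioc a b) with hν
  have hfin : IsFiniteMeasure ν := by
    constructor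
    rw [hν, Measure.restrict_apply_univ, Real.volume_Ioc]
    exact ENNReal.ofReal_lt_top
  have hmem1 : MemLp (fun _ : ℝ => (1 : ℂ)) (ENNReal.ofReal 2) ν := by
    rw [ENNReal.ofReal_ofNat]
    exact memLp_const 1
  have hmemF : MemLp F (ENNReal.ofReal 2) ν := by
    rw [ENNReal.ofReal_ofNat]
    refine (memLp_two_iff_integrable_sq_norm ?_).2 ?_
    · exact h1.1.aestronglyMeasurable
    · exact h2.1
  have key := integral_mul_norm_le_Lp_mul_Lq ((⟨by norm_num, by norm_num, by norm_num⟩ : Real.HolderConjugate 2 2)) hmem1 hmemF (μ := ν)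
  rw [integral_of_le hab, integral_of_le hab]
  calc (∫ t in Set.Ioc a b, ‖F t‖) = ∫ t, ‖(1:ℂ)‖ * ‖F t‖ ∂ν := by
        simp [hν]
    _ ≤ (∫ t, ‖(1:ℂ)‖ ^ (2:ℝ) ∂ν) ^ (1/(2:ℝ)) * (∫ t, ‖F t‖ ^ (2:ℝ) ∂ν) ^ (1/(2:ℝ)) := key
    _ = Real.sqrt (b - a) * Real.sqrt (∫ t in Set.Ioc a b, ‖F t‖ ^ 2) := by
        have e1 : (∫ _ : ℝ, ‖(1:ℂ)‖ ^ (2:ℝ) ∂ν) = b - a := by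
          simp [hν, Real.volume_Ioc, ENNReal.toReal_ofReal (sub_nonneg.2 hab), hab]
        have e2 : (∫ t, ‖F t‖ ^ (2:ℝ) ∂ν) = ∫ t in Set.Ioc a b, ‖F t‖ ^ 2 := by
          simp only [show ∀ x:ℝ, x ^ (2:ℝ) = x ^ 2 from fun x => by
            rw [show (2:ℝ) = ((2:ℕ):ℝ) by norm_num, Real.rpow_natCast], hν]
        rw [e1, e2, Real.sqrt_eq_rpow, Real.sqrt_eq_rpow]


/-- pointwise bound on `[-d,d]` for an `H¹` function, `d ≤ 1`. -/
lemma sq_norm_le_h1 {d : ℝ} (hd : 0 < d) (hd1 : d ≤ 1) (F F' : ℝ → ℂ)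
    (hc : ContinuousOn F (Set.Icc (-d) d))
    (hderiv : ∀ t ∈ Set.Ioo (-d) d, HasDerivAt F (F' t) t)
    (hint : IntervalIntegrable F' volume (-d) d)
    (hsq : IntervalIntegrable (fun t => ‖F' t‖ ^ 2) volume (-d) d)
    {s : ℝ} (hs : s ∈ Set.Icc (-d) d) :
    ‖F s‖ ^ 2 ≤ 3 / (2 * d) *
      ((∫ t in (-d)..d, ‖F t‖ ^ 2) + ∫ t in (-d)..d, ‖F' t‖ ^ 2) := by
  have hdd : (-d : ℝ) ≤ d := by linarith
  have hIcc : Set.uIcc (-d) d = Set.Icc (-d) d := Set.uIcc_of_le hdd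
  -- the function φ = ‖F‖² and its derivative χ.re
  set φ : ℝ → ℝ := fun t => ‖F t‖ ^ 2 with hφ
  set χ : ℝ → ℂ := fun t => F' t * (starRingEnd ℂ) (F t) + F t * (starRingEnd ℂ) (F' t) with hχ
  have hφc : ContinuousOn φ (Set.Icc (-d) d) := (hc.norm.pow 2)
  have hφderiv : ∀ t ∈ Set.Ioo (-d) d, HasDerivAt φ ((χ t).re) t := by
    intro t ht
    have h1 : HasDerivAt (fun t => F t * (starRingEnd ℂ) (F t)) (χ t) t :=
      (hderiv t ht).mul ((hderiv t ht).star)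
    have h2 := Complex.reCLM.hasFDerivAt.comp_hasDerivAt t h1
    have he : ∀ x : ℝ, φ x = Complex.reCLM (F x * (starRingEnd ℂ) (F x)) := by
      intro x
      simp [hφ, Complex.mul_conj, Complex.normSq_eq_norm_sq]
      norm_cast
    have hfe : φ = ⇑Complex.reCLM ∘ fun t => F t * (starRingEnd ℂ) (F t) := funext he
    rw [hfe]; exact h2
  set ψ : ℝ → ℝ := fun t => ‖F t‖ ^ 2 + ‖F' t‖ ^ 2 with hψ
  have hcu : ContinuousOn F (Set.uIcc (-d) d) := by rw [hIcc]; exact hc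
  have hφint : IntervalIntegrable φ volume (-d) d := by
    apply ContinuousOn.intervalIntegrable; rw [hIcc]; exact hφc
  have hχint : IntervalIntegrable χ volume (-d) d := by
    refine IntervalIntegrable.add ?_ ?_
    · exact hint.mul_continuousOn hcu.star
    · have : IntervalIntegrable (fun t => (starRingEnd ℂ) (F' t)) volume (-d) d := by
        constructor <;>
          exact (Complex.conjCLE.toContinuousLinearMap).integrable_comp (by first
            | exact hint.1 | exact hint.2)
      exact this.continuousOn_mul hcu
  have hφ'int : IntervalIntegrable (fun t => (χ t).re) volume (-d) d :=
    ⟨hχint.1.re, hχint.2.re⟩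
  have hψint : IntervalIntegrable ψ volume (-d) d := hφint.add hsq
  have hψ0 : ∀ x : ℝ, 0 ≤ ψ x := fun x => by positivity
  have hbound : ∀ t : ℝ, |(χ t).re| ≤ ψ t := by
    intro t
    have hψt : ψ t = ‖F t‖ ^ 2 + ‖F' t‖ ^ 2 := rfl
    rw [hψt]
    have h1 : |(χ t).re| ≤ ‖χ t‖ := Complex.abs_re_le_norm (χ t)
    have h2 : ‖χ t‖ ≤ ‖F' t‖ * ‖F t‖ + ‖F t‖ * ‖F' t‖ := by
      refine (norm_add_le _ _).trans ?_
      gcongr <;> simp [norm_mul]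
    nlinarith [norm_nonneg (F t), norm_nonneg (F' t), sq_nonneg (‖F t‖ - ‖F' t‖)]
  set C : ℝ := ∫ t in (-d)..d, ψ t with hC
  -- key: φ s ≤ φ t + C for all t ∈ Icc
  have hkey : ∀ t ∈ Set.Icc (-d) d, φ s ≤ φ t + C := by
    intro t ht
    have habs : ∀ a b : ℝ, a ∈ Set.Icc (-d) d → b ∈ Set.Icc (-d) d → a ≤ b →
        |∫ x in a..b, (χ x).re| ≤ C := by
      intro a b ha hb hab
      have hsub : Set.uIcc a b ⊆ Set.uIcc (-d) d := by
        rw [hIcc, Set.uIcc_of_le hab]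
        exact Set.Icc_subset_Icc ha.1 hb.2
      have hi1 : IntervalIntegrable (fun x => (χ x).re) volume a b := hφ'int.mono_set hsub
      calc |∫ x in a..b, (χ x).re| ≤ ∫ x in a..b, |(χ x).re| := by
            simpa using intervalIntegral.norm_integral_le_integral_norm (f := fun x => (χ x).re) hab
        _ ≤ ∫ x in a..b, ψ x :=
            intervalIntegral.integral_mono_on hab hi1.abs (hψint.mono_set hsub)
              (fun x _ => hbound x)
        _ ≤ C := intervalIntegral.integral_mono_interval ha.1 hab hb.2
              (Filter.Eventually.of_forall hψ0) hψint
    have hFTC : ∀ a b : ℝ, a ∈ Set.Icc (-d) d → b ∈ Set.Icc (-d) d → a ≤ b →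
        ∫ x in a..b, (χ x).re = φ b - φ a := by
      intro a b ha hb hab
      have hsub : Set.uIcc a b ⊆ Set.uIcc (-d) d := by
        rw [hIcc, Set.uIcc_of_le hab]
        exact Set.Icc_subset_Icc ha.1 hb.2
      refine intervalIntegral.integral_eq_sub_of_hasDeriv_right_of_le hab
        (hφc.mono (Set.Icc_subset_Icc ha.1 hb.2)) (fun x hx => ?_) (hφ'int.mono_set hsub)
      exact (hφderiv x ⟨lt_of_le_of_lt ha.1 hx.1, lt_of_lt_of_le hx.2 hb.2⟩).hasDerivWithinAt
    rcases le_total t s with h | h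
    · have := hFTC t s ht hs h
      have h2 := habs t s ht hs h
      rw [this] at h2
      have := abs_le.1 h2
      linarith [this.2]
    · have := hFTC s t hs ht h
      have h2 := habs s t hs ht h
      rw [this] at h2
      have := abs_le.1 h2
      linarith [this.2]
  -- integrate in t
  have hconst : (∫ _ in (-d)..d, φ s) = 2 * d * φ s := by
    rw [intervalIntegral.integral_const, smul_eq_mul]; ring
  have hmono : (∫ _ in (-d)..d, φ s) ≤ ∫ t in (-d)..d, (φ t + C) :=
    intervalIntegral.integral_mono_on hdd intervalIntegrable_const
      (hφint.add intervalIntegrable_const) hkey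
  have hsum : (∫ t in (-d)..d, (φ t + C)) = (∫ t in (-d)..d, φ t) + 2 * d * C := by
    rw [intervalIntegral.integral_add hφint intervalIntegrable_const,
      intervalIntegral.integral_const, smul_eq_mul]
    ring
  set A : ℝ := ∫ t in (-d)..d, ‖F t‖ ^ 2 with hA
  set B : ℝ := ∫ t in (-d)..d, ‖F' t‖ ^ 2 with hB
  have hCAB : C = A + B := intervalIntegral.integral_add hφint hsq
  have hA0 : 0 ≤ A := intervalIntegral.integral_nonneg hdd (fun x _ => by positivity)
  have hB0 : 0 ≤ B := intervalIntegral.integral_nonneg hdd (fun x _ => by positivity)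
  have h2d : 2 * d * φ s ≤ A + 2 * d * (A + B) := by
    rw [← hconst, ← hCAB]
    exact hmono.trans_eq (by rw [hsum])
  have hφs : φ s = ‖F s‖ ^ 2 := rfl
  rw [← hφs]
  rw [div_mul_eq_mul_div, le_div_iff₀ (by linarith : (0:ℝ) < 2 * d)]
  nlinarith [hd, hd1, hA0, hB0]

set_option maxHeartbeats 2000000 in
lemma delta_average_comparison (d ε w : ℝ) (hd : 0 < d) (hd1 : d ≤ 1)
    (hε : 0 < ε) (hεd : ε ≤ d)
    (f f' g g' : ℝ → ℂ)
    (hf_cont : ContinuousOn f (Set.Icc (-d) d))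
    (hf_deriv : ∀ t ∈ Set.Ioo (-d) d, HasDerivAt f (f' t) t)
    (hf'_int : IntervalIntegrable f' volume (-d) d)
    (hf'_sq : IntervalIntegrable (fun t => ‖f' t‖ ^ 2) volume (-d) d)
    (hg_cont : ContinuousOn g (Set.Icc (-d) d))
    (hg_deriv : ∀ t ∈ Set.Ioo (-d) d, HasDerivAt g (g' t) t)
    (hg'_int : IntervalIntegrable g' volume (-d) d)
    (hg'_sq : IntervalIntegrable (fun t => ‖g' t‖ ^ 2) volume (-d) d) :
    ‖((w / (2 * ε) : ℝ) : ℂ) * (∫ s in (-ε)..ε, f s * (starRingEnd ℂ) (g s))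
      - (w : ℂ) * (f 0 * (starRingEnd ℂ) (g 0))‖
    ≤ 2 * |w| * Real.sqrt (ε / d)
        * Real.sqrt ((∫ s in (-d)..d, ‖f s‖ ^ 2) + ∫ s in (-d)..d, ‖f' s‖ ^ 2)
        * Real.sqrt ((∫ s in (-d)..d, ‖g s‖ ^ 2) + ∫ s in (-d)..d, ‖g' s‖ ^ 2) := by
  have hdd : (-d : ℝ) ≤ d := by linarith
  have hεε : (-ε : ℝ) ≤ ε := by linarith
  have hIccsub : Set.Icc (-ε) ε ⊆ Set.Icc (-d) d := Set.Icc_subset_Icc (by linarith) hεd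
  have hIccd : Set.uIcc (-d) d = Set.Icc (-d) d := Set.uIcc_of_le hdd
  set h : ℝ → ℂ := fun s => f s * (starRingEnd ℂ) (g s) with hh
  set h' : ℝ → ℂ := fun s => f' s * (starRingEnd ℂ) (g s) + f s * (starRingEnd ℂ) (g' s) with hh'
  -- abbreviations for H¹ data
  set Af : ℝ := ∫ s in (-d)..d, ‖f s‖ ^ 2 with hAf
  set Bf : ℝ := ∫ s in (-d)..d, ‖f' s‖ ^ 2 with hBf
  set Ag : ℝ := ∫ s in (-d)..d, ‖g s‖ ^ 2 with hAg
  set Bg : ℝ := ∫ s in (-d)..d, ‖g' s‖ ^ 2 with hBg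
  have hAf0 : 0 ≤ Af := intervalIntegral.integral_nonneg hdd (fun x _ => by positivity)
  have hBf0 : 0 ≤ Bf := intervalIntegral.integral_nonneg hdd (fun x _ => by positivity)
  have hAg0 : 0 ≤ Ag := intervalIntegral.integral_nonneg hdd (fun x _ => by positivity)
  have hBg0 : 0 ≤ Bg := intervalIntegral.integral_nonneg hdd (fun x _ => by positivity)
  set Mf : ℝ := Real.sqrt (3 / (2 * d) * (Af + Bf)) with hMf
  set Mg : ℝ := Real.sqrt (3 / (2 * d) * (Ag + Bg)) with hMg
  have hMf0 : 0 ≤ Mf := Real.sqrt_nonneg _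
  have hMg0 : 0 ≤ Mg := Real.sqrt_nonneg _
  have hfM : ∀ t ∈ Set.Icc (-d) d, ‖f t‖ ≤ Mf := by
    intro t ht
    rw [← Real.sqrt_sq (norm_nonneg (f t))]
    exact Real.sqrt_le_sqrt (sq_norm_le_h1 hd hd1 f f' hf_cont hf_deriv hf'_int hf'_sq ht)
  have hgM : ∀ t ∈ Set.Icc (-d) d, ‖g t‖ ≤ Mg := by
    intro t ht
    rw [← Real.sqrt_sq (norm_nonneg (g t))]
    exact Real.sqrt_le_sqrt (sq_norm_le_h1 hd hd1 g g' hg_cont hg_deriv hg'_int hg'_sq ht)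
  -- integrability of h and h'
  have hh_cont : ContinuousOn h (Set.Icc (-d) d) := hf_cont.mul hg_cont.star
  have hh'_int : IntervalIntegrable h' volume (-d) d := by
    refine IntervalIntegrable.add ?_ ?_
    · exact hf'_int.mul_continuousOn (by rw [hIccd]; exact hg_cont.star)
    · have : IntervalIntegrable (fun t => (starRingEnd ℂ) (g' t)) volume (-d) d := by
        constructor <;>
          exact (Complex.conjCLE.toContinuousLinearMap).integrable_comp (by first
            | exact hg'_int.1 | exact hg'_int.2)
      exact this.continuousOn_mul (by rw [hIccd]; exact hf_cont)
  have hh'_norm_int : IntervalIntegrable (fun t => ‖h' t‖) volume (-d) d := hh'_int.norm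
  -- FTC for h on subintervals of [-d,d]
  have hFTC : ∀ a b : ℝ, a ∈ Set.Icc (-d) d → b ∈ Set.Icc (-d) d → a ≤ b →
      ∫ x in a..b, h' x = h b - h a := by
    intro a b ha hb hab
    have hsub : Set.uIcc a b ⊆ Set.uIcc (-d) d := by
      rw [hIccd, Set.uIcc_of_le hab]
      exact Set.Icc_subset_Icc ha.1 hb.2
    refine intervalIntegral.integral_eq_sub_of_hasDeriv_right_of_le hab
      (hh_cont.mono (Set.Icc_subset_Icc ha.1 hb.2)) (fun x hx => ?_) (hh'_int.mono_set hsub)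
    have hx' : x ∈ Set.Ioo (-d) d := ⟨lt_of_le_of_lt ha.1 hx.1, lt_of_lt_of_le hx.2 hb.2⟩
    exact ((hf_deriv x hx').mul ((hg_deriv x hx').star)).hasDerivWithinAt
  set Kp : ℝ := ∫ t in (0:ℝ)..ε, ‖h' t‖ with hKp
  set Km : ℝ := ∫ t in (-ε)..(0:ℝ), ‖h' t‖ with hKm
  have h0mem : (0:ℝ) ∈ Set.Icc (-d) d := ⟨by linarith, by linarith⟩
  have hclaim1 : ∀ s ∈ Set.Icc (0:ℝ) ε, ‖h s - h 0‖ ≤ Kp := by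
    intro s hsx
    have hsmem : s ∈ Set.Icc (-d) d := ⟨by linarith [hsx.1], by linarith [hsx.2]⟩
    rw [← hFTC 0 s h0mem hsmem hsx.1]
    calc ‖∫ x in (0:ℝ)..s, h' x‖ ≤ ∫ x in (0:ℝ)..s, ‖h' x‖ :=
          intervalIntegral.norm_integral_le_integral_norm hsx.1
      _ ≤ Kp := intervalIntegral.integral_mono_interval le_rfl hsx.1 hsx.2
          (Filter.Eventually.of_forall fun x => norm_nonneg _)
          (hh'_norm_int.mono_set (by
            rw [hIccd, Set.uIcc_of_le (by linarith : (0:ℝ) ≤ ε)]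
            exact Set.Icc_subset_Icc (by linarith) hεd))
  have hclaim2 : ∀ s ∈ Set.Icc (-ε) (0:ℝ), ‖h s - h 0‖ ≤ Km := by
    intro s hsx
    have hsmem : s ∈ Set.Icc (-d) d := ⟨by linarith [hsx.1], by linarith [hsx.2]⟩
    rw [norm_sub_rev, ← hFTC s 0 hsmem h0mem hsx.2]
    calc ‖∫ x in s..(0:ℝ), h' x‖ ≤ ∫ x in s..(0:ℝ), ‖h' x‖ :=
          intervalIntegral.norm_integral_le_integral_norm hsx.2
      _ ≤ Km := intervalIntegral.integral_mono_interval hsx.1 hsx.2 le_rfl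
          (Filter.Eventually.of_forall fun x => norm_nonneg _)
          (hh'_norm_int.mono_set (by
            rw [hIccd, Set.uIcc_of_le (show (-ε:ℝ) ≤ 0 by linarith)]
            exact Set.Icc_subset_Icc (by linarith) (by linarith)))
  -- integrability of h and of s ↦ ‖h s - h 0‖ on subintervals
  have hcont_norm : ∀ a b : ℝ, Set.Icc a b ⊆ Set.Icc (-d) d → a ≤ b →
      IntervalIntegrable (fun s => ‖h s - h 0‖) volume a b := by
    intro a b hab hle
    apply ContinuousOn.intervalIntegrable
    rw [Set.uIcc_of_le hle]
    exact ((hh_cont.mono hab).sub continuousOn_const).norm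
  have hIccε0 : Set.Icc (-ε) (0:ℝ) ⊆ Set.Icc (-d) d :=
    Set.Icc_subset_Icc (by linarith) (by linarith)
  have hIcc0ε : Set.Icc (0:ℝ) ε ⊆ Set.Icc (-d) d :=
    Set.Icc_subset_Icc (by linarith) (by linarith)
  have hint1 := hcont_norm (-ε) 0 hIccε0 (by linarith)
  have hint2 := hcont_norm 0 ε hIcc0ε (by linarith)
  have hsplit1 : (∫ s in (-ε)..(0:ℝ), ‖h s - h 0‖) ≤ ε * Km := by
    calc (∫ s in (-ε)..(0:ℝ), ‖h s - h 0‖) ≤ ∫ _ in (-ε)..(0:ℝ), Km :=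
          intervalIntegral.integral_mono_on (by linarith) hint1
            intervalIntegrable_const hclaim2
      _ = ε * Km := by rw [intervalIntegral.integral_const, smul_eq_mul]; ring
  have hsplit2 : (∫ s in (0:ℝ)..ε, ‖h s - h 0‖) ≤ ε * Kp := by
    calc (∫ s in (0:ℝ)..ε, ‖h s - h 0‖) ≤ ∫ _ in (0:ℝ)..ε, Kp :=
          intervalIntegral.integral_mono_on (by linarith) hint2
            intervalIntegrable_const hclaim1
      _ = ε * Kp := by rw [intervalIntegral.integral_const, smul_eq_mul]; ring
  have hT0 : (∫ s in (-ε)..ε, ‖h s - h 0‖) ≤ ε * (Km + Kp) := by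
    rw [← intervalIntegral.integral_add_adjacent_intervals hint1 hint2]
    linarith
  have hsubε : Set.uIcc (-ε) ε ⊆ Set.uIcc (-d) d := by
    rw [hIccd, Set.uIcc_of_le hεε]; exact hIccsub
  have hKsum : Km + Kp = ∫ t in (-ε)..ε, ‖h' t‖ :=
    intervalIntegral.integral_add_adjacent_intervals
      (hh'_norm_int.mono_set (by
        rw [hIccd, Set.uIcc_of_le (show (-ε:ℝ) ≤ 0 by linarith)]; exact hIccε0))
      (hh'_norm_int.mono_set (by
        rw [hIccd, Set.uIcc_of_le (show (0:ℝ) ≤ ε by linarith)]; exact hIcc0ε))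
  have hint_h : IntervalIntegrable h volume (-ε) ε := by
    apply ContinuousOn.intervalIntegrable
    rw [Set.uIcc_of_le hεε]
    exact hh_cont.mono hIccsub
  -- rewrite the left-hand side
  have hε2 : ((ε : ℝ) : ℂ) ≠ 0 := by
    simp only [ne_eq, Complex.ofReal_eq_zero]
    positivity
  have key : ((w / (2 * ε) : ℝ) : ℂ) * (∫ s in (-ε)..ε, h s) - (w : ℂ) * h 0
      = ((w / (2 * ε) : ℝ) : ℂ) * (∫ s in (-ε)..ε, (h s - h 0)) := by
    rw [intervalIntegral.integral_sub hint_h intervalIntegrable_const,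
      intervalIntegral.integral_const]
    rw [Complex.real_smul]
    push_cast
    field_simp [hh, hε2]
    ring
  have hnorm1 : ‖((w / (2 * ε) : ℝ) : ℂ) * (∫ s in (-ε)..ε, h s) - (w : ℂ) * h 0‖
      ≤ |w| / (2 * ε) * (ε * (Km + Kp)) := by
    rw [key, norm_mul, Complex.norm_real, Real.norm_eq_abs, abs_div,
      abs_of_pos (by positivity : (0:ℝ) < 2 * ε)]
    exact mul_le_mul_of_nonneg_left
      ((intervalIntegral.norm_integral_le_integral_norm hεε).trans hT0)
      (by positivity)
  -- pointwise bound for ‖h'‖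
  have hpt : ∀ t ∈ Set.Icc (-ε) ε, ‖h' t‖ ≤ Mg * ‖f' t‖ + Mf * ‖g' t‖ := by
    intro t ht
    have htd := hIccsub ht
    have : ‖h' t‖ ≤ ‖f' t‖ * ‖g t‖ + ‖f t‖ * ‖g' t‖ := by
      refine (norm_add_le _ _).trans ?_
      gcongr <;> simp [norm_mul]
    calc ‖h' t‖ ≤ ‖f' t‖ * ‖g t‖ + ‖f t‖ * ‖g' t‖ := this
      _ ≤ ‖f' t‖ * Mg + Mf * ‖g' t‖ := by
          gcongr
          · exact hgM t htd
          · exact hfM t htd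
      _ = Mg * ‖f' t‖ + Mf * ‖g' t‖ := by ring
  have hf'n : IntervalIntegrable (fun t => ‖f' t‖) volume (-ε) ε := hf'_int.norm.mono_set hsubε
  have hg'n : IntervalIntegrable (fun t => ‖g' t‖) volume (-ε) ε := hg'_int.norm.mono_set hsubε
  set If' : ℝ := ∫ t in (-ε)..ε, ‖f' t‖ with hIf'
  set Ig' : ℝ := ∫ t in (-ε)..ε, ‖g' t‖ with hIg'
  have hh'b : (∫ t in (-ε)..ε, ‖h' t‖) ≤ Mg * If' + Mf * Ig' := by
    calc (∫ t in (-ε)..ε, ‖h' t‖) ≤ ∫ t in (-ε)..ε, (Mg * ‖f' t‖ + Mf * ‖g' t‖) :=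
          intervalIntegral.integral_mono_on hεε (hh'_norm_int.mono_set hsubε)
            ((hf'n.const_mul Mg).add (hg'n.const_mul Mf)) hpt
      _ = Mg * If' + Mf * Ig' := by
          rw [intervalIntegral.integral_add (hf'n.const_mul Mg) (hg'n.const_mul Mf),
            intervalIntegral.integral_const_mul, intervalIntegral.integral_const_mul]
  -- Cauchy–Schwarz bounds
  set Pf : ℝ := Real.sqrt (Af + Bf) with hPf
  set Pg : ℝ := Real.sqrt (Ag + Bg) with hPg
  have hPf0 : 0 ≤ Pf := Real.sqrt_nonneg _
  have hPg0 : 0 ≤ Pg := Real.sqrt_nonneg _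
  have hCSf : If' ≤ Real.sqrt (2 * ε) * Pf := by
    have h1 := l1_le_sqrt_len_mul_l2 hεε f' (hf'_int.mono_set hsubε) (hf'_sq.mono_set hsubε)
    have h2 : (∫ t in (-ε)..ε, ‖f' t‖ ^ 2) ≤ Bf :=
      intervalIntegral.integral_mono_interval (by linarith) hεε hεd
        (Filter.Eventually.of_forall fun x => by positivity) hf'_sq
    have h3 : ε - (-ε) = 2 * ε := by ring
    rw [h3] at h1
    refine h1.trans ?_
    exact mul_le_mul_of_nonneg_left (Real.sqrt_le_sqrt (h2.trans (by linarith)))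
      (Real.sqrt_nonneg _)
  have hCSg : Ig' ≤ Real.sqrt (2 * ε) * Pg := by
    have h1 := l1_le_sqrt_len_mul_l2 hεε g' (hg'_int.mono_set hsubε) (hg'_sq.mono_set hsubε)
    have h2 : (∫ t in (-ε)..ε, ‖g' t‖ ^ 2) ≤ Bg :=
      intervalIntegral.integral_mono_interval (by linarith) hεε hεd
        (Filter.Eventually.of_forall fun x => by positivity) hg'_sq
    have h3 : ε - (-ε) = 2 * ε := by ring
    rw [h3] at h1
    refine h1.trans ?_
    exact mul_le_mul_of_nonneg_left (Real.sqrt_le_sqrt (h2.trans (by linarith)))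
      (Real.sqrt_nonneg _)
  have hMfP : Mf = Real.sqrt (3 / (2 * d)) * Pf := by
    rw [hMf, hPf, Real.sqrt_mul (by positivity)]
  have hMgP : Mg = Real.sqrt (3 / (2 * d)) * Pg := by
    rw [hMg, hPg, Real.sqrt_mul (by positivity)]
  have hc1 : Real.sqrt (3 / (2 * d)) * Real.sqrt (2 * ε) ≤ 2 * Real.sqrt (ε / d) := by
    rw [← Real.sqrt_mul (by positivity)]
    have h4 : 3 / (2 * d) * (2 * ε) = 3 * (ε / d) := by field_simp
    rw [h4]
    have h5 : (3:ℝ) * (ε / d) ≤ 4 * (ε / d) := by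
      have : (0:ℝ) ≤ ε / d := by positivity
      linarith
    calc Real.sqrt (3 * (ε / d)) ≤ Real.sqrt (4 * (ε / d)) := Real.sqrt_le_sqrt h5
      _ = 2 * Real.sqrt (ε / d) := by
          rw [Real.sqrt_mul (by norm_num), show Real.sqrt 4 = 2 by
            rw [show (4:ℝ) = 2 ^ 2 by norm_num, Real.sqrt_sq (by norm_num)]]
  -- put everything together
  have hsq2ε : (0:ℝ) ≤ Real.sqrt (2 * ε) := Real.sqrt_nonneg _
  have hsq3 : (0:ℝ) ≤ Real.sqrt (3 / (2 * d)) := Real.sqrt_nonneg _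
  have hKmKp : Km + Kp ≤ Real.sqrt (3 / (2 * d)) * Real.sqrt (2 * ε) * (2 * (Pf * Pg)) := by
    rw [hKsum]
    refine hh'b.trans ?_
    rw [hMfP, hMgP]
    have t1 : Real.sqrt (3 / (2 * d)) * Pg * If' ≤
        Real.sqrt (3 / (2 * d)) * Pg * (Real.sqrt (2 * ε) * Pf) := by
      apply mul_le_mul_of_nonneg_left hCSf (by positivity)
    have t2 : Real.sqrt (3 / (2 * d)) * Pf * Ig' ≤
        Real.sqrt (3 / (2 * d)) * Pf * (Real.sqrt (2 * ε) * Pg) := by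
      apply mul_le_mul_of_nonneg_left hCSg (by positivity)
    nlinarith [t1, t2]
  calc ‖((w / (2 * ε) : ℝ) : ℂ) * (∫ s in (-ε)..ε, h s) - (w : ℂ) * h 0‖
      ≤ |w| / (2 * ε) * (ε * (Km + Kp)) := hnorm1
    _ ≤ |w| / (2 * ε) * (ε * (Real.sqrt (3 / (2 * d)) * Real.sqrt (2 * ε) * (2 * (Pf * Pg)))) := by
        apply mul_le_mul_of_nonneg_left (mul_le_mul_of_nonneg_left hKmKp (le_of_lt hε))
        positivity
    _ = |w| * (Real.sqrt (3 / (2 * d)) * Real.sqrt (2 * ε)) * (Pf * Pg) := by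
        field_simp
    _ ≤ |w| * (2 * Real.sqrt (ε / d)) * (Pf * Pg) := by
        apply mul_le_mul_of_nonneg_right (mul_le_mul_of_nonneg_left hc1 (abs_nonneg w))
        positivity
    _ = 2 * |w| * Real.sqrt (ε / d) * Pf * Pg := by ring

/-- Comparison of the sesquilinear form of the magnetic Schrödinger operator
with scaled potential `w/(2ε)` on `[−ε,ε] × Y` on the product `I × Y`
(`I = [−d,d]`, `Y` with probability measure `μ`, transverse Dirichlet energy
`T ≥ 0`) with the form on the interval with a δ interaction of strength `w`
at `0`:  `|h_ε(Jf, u) − ȟ(f, J*u)| ≤ 2|w|·(ε/d)^{1/2}·‖f‖_{H¹(I)}·‖u‖_{H¹(I×Y)}`.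
Here `(J*u)(s) = ∫_Y u(s,y) dμ(y)`, the derivative and magnetic terms cancel,
`u'` is the longitudinal derivative of `u`, and
`‖u‖²_{H¹(I×Y)} = ∫∫|u|² + ∫∫|u'|² + T`. -/
theorem form_comparison_edge_neighbourhood
    {Y : Type*} [MeasurableSpace Y] (μ : Measure Y) [IsProbabilityMeasure μ]
    (d ε A w T : ℝ) (hd : 0 < d) (hd1 : d ≤ 1)
    (hε : 0 < ε) (hε1 : ε ≤ 1) (hεd : ε ≤ d) (hT : 0 ≤ T)
    (f f' : ℝ → ℂ)
    (hf_cont : ContinuousOn f (Set.Icc (-d) d))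
    (hf_deriv : ∀ t ∈ Set.Ioo (-d) d, HasDerivAt f (f' t) t)
    (hf'_int : IntervalIntegrable f' volume (-d) d)
    (hf'_sq : IntervalIntegrable (fun t => ‖f' t‖ ^ 2) volume (-d) d)
    (u u' : ℝ × Y → ℂ)
    (hg_cont : ContinuousOn (fun s => ∫ y, u (s, y) ∂μ) (Set.Icc (-d) d))
    (hg_deriv : ∀ s ∈ Set.Ioo (-d) d,
      HasDerivAt (fun t => ∫ y, u (t, y) ∂μ) (∫ y, u' (s, y) ∂μ) s)
    (hg'_int : IntervalIntegrable (fun s => ∫ y, u' (s, y) ∂μ) volume (-d) d)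
    (hg'_sq : IntervalIntegrable (fun s => ‖∫ y, u' (s, y) ∂μ‖ ^ 2) volume (-d) d)
    (hJ1 : (∫ s in (-d)..d, ‖∫ y, u (s, y) ∂μ‖ ^ 2)
      ≤ ∫ p, ‖u p‖ ^ 2 ∂((volume.restrict (Set.Ioo (-d) d)).prod μ))
    (hJ2 : (∫ s in (-d)..d, ‖∫ y, u' (s, y) ∂μ‖ ^ 2)
      ≤ ∫ p, ‖u' p‖ ^ 2 ∂((volume.restrict (Set.Ioo (-d) d)).prod μ)) :
    ‖((∫ s in (-d)..d, (f' s + Complex.I * A * f s)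
          * (starRingEnd ℂ) (∫ y, u (s, y) ∂μ))
        + ((w / (2 * ε) : ℝ) : ℂ)
          * ∫ s in (-ε)..ε, f s * (starRingEnd ℂ) (∫ y, u (s, y) ∂μ))
      - ((∫ s in (-d)..d, (f' s + Complex.I * A * f s)
          * (starRingEnd ℂ) (∫ y, u (s, y) ∂μ))
        + (w : ℂ) * (f 0 * (starRingEnd ℂ) (∫ y, u (0, y) ∂μ)))‖
    ≤ 2 * |w| * Real.sqrt (ε / d)
        * Real.sqrt ((∫ s in (-d)..d, ‖f s‖ ^ 2) + ∫ s in (-d)..d, ‖f' s‖ ^ 2)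
        * Real.sqrt ((∫ p, ‖u p‖ ^ 2 ∂((volume.restrict (Set.Ioo (-d) d)).prod μ))
            + (∫ p, ‖u' p‖ ^ 2 ∂((volume.restrict (Set.Ioo (-d) d)).prod μ)) + T) := by
  rw [add_sub_add_left_eq_sub]
  have main := delta_average_comparison d ε w hd hd1 hε hεd f f'
    (fun s => ∫ y, u (s, y) ∂μ) (fun s => ∫ y, u' (s, y) ∂μ)
    hf_cont hf_deriv hf'_int hf'_sq hg_cont hg_deriv hg'_int hg'_sq
  refine main.trans ?_
  have h2 : Real.sqrt ((∫ s in (-d)..d, ‖∫ y, u (s, y) ∂μ‖ ^ 2)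
      + ∫ s in (-d)..d, ‖∫ y, u' (s, y) ∂μ‖ ^ 2)
      ≤ Real.sqrt ((∫ p, ‖u p‖ ^ 2 ∂((volume.restrict (Set.Ioo (-d) d)).prod μ))
          + (∫ p, ‖u' p‖ ^ 2 ∂((volume.restrict (Set.Ioo (-d) d)).prod μ)) + T) :=
    Real.sqrt_le_sqrt (by linarith)
  exact mul_le_mul_of_nonneg_left h2 (by positivity)
end

section
/- Let n ≥ 1, m ≤ n, S ∈ ℂ^{m×m} Hermitian, and T ∈ ℂ^{m×(n−m)}. Define the n×n block matrices A = [[S, 0],[−T*, I_{n−m}]] and B = [[I_m, T],[0, 0]]. Then the n×2n matrix (A | B) has rank n, and A·B* is Hermitian. Consequently, the vertex conditions B·f′(0) = A·f(0) are admissible self-adjoint vertex conditions for a quantum graph vertex of degree n. -/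
open Matrix

/-- The ST-parametrisation gives admissible self-adjoint vertex conditions:
for Hermitian `S ∈ ℂ^{m×m}` and `T ∈ ℂ^{m×k}` (degree `n = m + k`), the block
matrices `A = [[S, 0], [−T*, I]]` and `B = [[I, T], [0, 0]]` satisfy that the
`n × 2n` matrix `(A | B)` has maximal rank `n = m + k`, and `A·B*` is
Hermitian (Kostrykin–Schrader conditions). -/
theorem ST_parametrisation_admissible (m k : ℕ)
    (S : Matrix (Fin m) (Fin m) ℂ) (hS : S.IsHermitian)
    (T : Matrix (Fin m) (Fin k) ℂ) :
    (Matrix.fromCols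
        (Matrix.fromBlocks S 0 (-T.conjTranspose) (1 : Matrix (Fin k) (Fin k) ℂ))
        (Matrix.fromBlocks (1 : Matrix (Fin m) (Fin m) ℂ) T 0 0)).rank = m + k ∧
    ((Matrix.fromBlocks S 0 (-T.conjTranspose) (1 : Matrix (Fin k) (Fin k) ℂ))
        * (Matrix.fromBlocks (1 : Matrix (Fin m) (Fin m) ℂ) T 0 0).conjTranspose).IsHermitian := by
  set A := Matrix.fromBlocks S 0 (-T.conjTranspose) (1 : Matrix (Fin k) (Fin k) ℂ)
  set B := Matrix.fromBlocks (1 : Matrix (Fin m) (Fin m) ℂ) T 0 0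
  constructor
  · -- rank part
    have hMN : (Matrix.fromCols A B) *
        (Matrix.fromRows
          (Matrix.fromBlocks (0 : Matrix (Fin m) (Fin m) ℂ) (0 : Matrix (Fin m) (Fin k) ℂ) (0 : Matrix (Fin k) (Fin m) ℂ) (1 : Matrix (Fin k) (Fin k) ℂ))
          (Matrix.fromBlocks (1 : Matrix (Fin m) (Fin m) ℂ) (0 : Matrix (Fin m) (Fin k) ℂ) (0 : Matrix (Fin k) (Fin m) ℂ) (0 : Matrix (Fin k) (Fin k) ℂ))) = 1 := by
      rw [Matrix.fromCols_mul_fromRows]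
      simp [A, B, Matrix.fromBlocks_multiply, Matrix.fromBlocks_add, ← Matrix.fromBlocks_one]
    apply le_antisymm
    · simpa using Matrix.rank_le_card_height (Matrix.fromCols A B)
    · have h1 : (Matrix.fromCols A B *
        (Matrix.fromRows
          (Matrix.fromBlocks (0 : Matrix (Fin m) (Fin m) ℂ) (0 : Matrix (Fin m) (Fin k) ℂ) (0 : Matrix (Fin k) (Fin m) ℂ) (1 : Matrix (Fin k) (Fin k) ℂ))
          (Matrix.fromBlocks (1 : Matrix (Fin m) (Fin m) ℂ) (0 : Matrix (Fin m) (Fin k) ℂ) (0 : Matrix (Fin k) (Fin m) ℂ) (0 : Matrix (Fin k) (Fin k) ℂ)))).rank ≤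
          (Matrix.fromCols A B).rank := Matrix.rank_mul_le_left _ _
      rw [hMN] at h1
      simpa using h1
  · -- Hermitian part
    have hAB : A * B.conjTranspose = Matrix.fromBlocks S 0 0 0 := by
      simp [A, B, Matrix.fromBlocks_conjTranspose, Matrix.fromBlocks_multiply]
    rw [hAB]
    unfold Matrix.IsHermitian
    simp [Matrix.fromBlocks_conjTranspose, hS.eq]
end
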